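/- Let Γ ⊊ Z^d be (K,Q)-relatively dense. Then the Cheeger constant β(Γ) = inf over nonempty finite A ⊂ Z^d \ Γ of ⟨χ_A, (-Δ_Γ)χ_A⟩ / |A| satisfies K_*^{-d} ≤ β(Γ) ≤ 2d. -/

import Mathlib

open scoped BigOperators

noncomputable section

/-- `ℤ^d`. -/
abbrev Zd (d : ℕ) := Fin d → ℤ

/-- `ℓ¹` distance on `ℤ^d`. -/
def dist1 {d : ℕ} (x y : Zd d) : ℕ := ∑ i, (x i - y i).natAbs

/-- the `i`-th coordinate unit vector. -/
def unitVec {d : ℕ} (i : Fin d) : Zd d := fun j => if j = i then 1 else 0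

/-- the negative discrete Laplacian: `(-Δφ)(x) = Σ_{‖x-y‖₁=1} (φ(x) - φ(y))`. -/
def negLap {d : ℕ} (φ : Zd d → ℝ) (x : Zd d) : ℝ :=
  ∑ i, ((φ x - φ (x + unitVec i)) + (φ x - φ (x - unitVec i)))

/-- characteristic function of a set. -/
def chi {d : ℕ} (A : Set (Zd d)) : Zd d → ℝ := A.indicator fun _ => 1

/-- edge boundary `∂A = {(x,y) ∈ A × Aᶜ : ‖x-y‖₁ = 1}`. -/
def bdry {d : ℕ} (A : Set (Zd d)) : Set (Zd d × Zd d) :=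
  {p | p.1 ∈ A ∧ p.2 ∉ A ∧ dist1 p.1 p.2 = 1}

/-- squared `ℓ²` norm (for finitely supported functions). -/
def norm2 {d : ℕ} (φ : Zd d → ℝ) : ℝ := ∑ᶠ x, φ x ^ 2

/-- quadratic form `⟨φ, (-Δ + V)φ⟩` (for finitely supported `φ`). -/
def energy {d : ℕ} (V : Zd d → ℝ) (φ : Zd d → ℝ) : ℝ :=
  ∑ᶠ x, φ x * (negLap φ x + V x * φ x)

/-- `V` is a bounded potential. -/
def BddPot {d : ℕ} (V : Zd d → ℝ) : Prop := ∃ C, ∀ x, |V x| ≤ C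

/-- the spread `spr(V) = sup V - inf V` of a bounded potential. -/
def spr {d : ℕ} (V : Zd d → ℝ) : ℝ := sSup (Set.range V) - sInf (Set.range V)

/-- `E_∅(H) = inf σ(-Δ + V)`, characterized variationally over normalized finitely
supported functions. -/
def E0 {d : ℕ} (V : Zd d → ℝ) : ℝ :=
  sInf {r | ∃ φ : Zd d → ℝ, (Function.support φ).Finite ∧ norm2 φ = 1 ∧ r = energy V φ}

/-- `E_Γ(H) = inf σ(H_Γ)`, the ground state energy of the `Γ`-trimmed operator,
characterized variationally over normalized finitely supported functions vanishing on `Γ`. -/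
def EG {d : ℕ} (V : Zd d → ℝ) (Γ : Set (Zd d)) : ℝ :=
  sInf {r | ∃ φ : Zd d → ℝ, (Function.support φ).Finite ∧ (∀ x ∈ Γ, φ x = 0) ∧
    norm2 φ = 1 ∧ r = energy V φ}

/-- `E_Γ(H,t) = inf σ(H + t χ_Γ)`. -/
def EGt {d : ℕ} (V : Zd d → ℝ) (Γ : Set (Zd d)) (t : ℝ) : ℝ :=
  E0 fun x => V x + t * chi Γ x

/-- the open box `Λ⁰_K(ζ) = {y : ‖y-ζ‖_∞ < K/2}`. -/
def Lam0 {d : ℕ} (K : ℕ) (ζ : Zd d) : Set (Zd d) := {y | ∀ i, 2 * (y i - ζ i).natAbs < K}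

/-- `Γ` is `(K,Q)`-relatively dense: `|Γ ∩ Λ⁰_K(ζ)| ≥ Q` for all `ζ ∈ KZ^d`. -/
def RelDense {d : ℕ} (Γ : Set (Zd d)) (K Q : ℕ) : Prop :=
  ∀ z : Zd d, Q ≤ (Γ ∩ Lam0 K fun i => (K : ℤ) * z i).ncard

/-- `K_* = K` if `K` is odd, `K+1` if `K` is even. -/
def Kstar (K : ℕ) : ℕ := if K % 2 = 1 then K else K + 1

/-- `⟨χ_A, (-Δ)χ_A⟩` for a finite set `A`; for `A ⊆ Γᶜ` this coincides with
`⟨χ_A, (-Δ_Γ)χ_A⟩` for the `Γ`-trimmed Laplacian. -/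
def qform {d : ℕ} (A : Finset (Zd d)) : ℝ := ∑ x ∈ A, negLap (chi ↑A) x

/-- Cheeger constant `β(Γ)` of the `Γ`-trimmed Laplacian. -/
def betaG {d : ℕ} (Γ : Set (Zd d)) : ℝ :=
  sInf {r | ∃ A : Finset (Zd d), A.Nonempty ∧ (↑A : Set (Zd d)) ⊆ Γᶜ ∧
    r = qform A / A.card}

/-- `⟨χ_A, H(t)χ_A⟩ = ⟨χ_A, (-Δ)χ_A⟩ + t|A ∩ Γ|` for a finite set `A`. -/
def qformT {d : ℕ} (Γ : Set (Zd d)) (t : ℝ) (A : Finset (Zd d)) : ℝ :=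
  qform A + t * ((↑A ∩ Γ : Set (Zd d)).ncard)

/-- Cheeger constant `β(t)` of `H(t) = -Δ + t χ_Γ`. -/
def betaT {d : ℕ} (Γ : Set (Zd d)) (t : ℝ) : ℝ :=
  sInf {r | ∃ A : Finset (Zd d), A.Nonempty ∧ r = qformT Γ t A / A.card}

/-- the box `Λ_L(x₀) = {y : ‖y-x₀‖_∞ ≤ L/2}`. -/
def box {d : ℕ} (L : ℕ) (x₀ : Zd d) : Set (Zd d) := {y | ∀ i, 2 * (y i - x₀ i).natAbs ≤ L}

/-- `φ` is an eigenfunction of `H_Λ = (-Δ + V)_Λ` with eigenvalue `E`. -/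
def eigOn {d : ℕ} (V : Zd d → ℝ) (Λ : Set (Zd d)) (φ : Zd d → ℝ) (E : ℝ) : Prop :=
  (∀ x ∉ Λ, φ x = 0) ∧ ∀ x ∈ Λ, negLap φ x + V x * φ x = E * φ x

/-- `E^Λ = inf σ(H_Λ)`, variationally. -/
def Ebox {d : ℕ} (V : Zd d → ℝ) (Λ : Set (Zd d)) : ℝ :=
  sInf {r | ∃ φ : Zd d → ℝ, (∀ x ∉ Λ, φ x = 0) ∧ norm2 φ = 1 ∧ r = energy V φ}

-- ==== auxiliaries ====
open Classical

lemma chi_coe {d : ℕ} (A : Finset (Zd d)) (y : Zd d) :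
    chi (↑A : Set (Zd d)) y = if y ∈ A then 1 else 0 := by
  simp [chi, Set.indicator_apply]

/-- boundary-count at a point. -/
def eA {d : ℕ} (A : Finset (Zd d)) (x : Zd d) : ℝ :=
  ∑ i, ((if x + unitVec i ∈ A then (0:ℝ) else 1) + (if x - unitVec i ∈ A then (0:ℝ) else 1))

lemma negLap_chi {d : ℕ} (A : Finset (Zd d)) {x : Zd d} (hx : x ∈ A) :
    negLap (chi ↑A) x = eA A x := by
  unfold negLap eA
  refine Finset.sum_congr rfl fun i _ => ?_
  rw [chi_coe, chi_coe, chi_coe]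
  simp only [hx, if_true]
  split_ifs <;> norm_num

lemma eA_nonneg {d : ℕ} (A : Finset (Zd d)) (x : Zd d) : 0 ≤ eA A x := by
  unfold eA
  refine Finset.sum_nonneg fun i _ => ?_
  split_ifs <;> norm_num

lemma eA_ge_one {d : ℕ} (A : Finset (Zd d)) (x : Zd d)
    (h : ∃ i, x + unitVec i ∉ A ∨ x - unitVec i ∉ A) : 1 ≤ eA A x := by
  obtain ⟨i, hi⟩ := h
  set f : Fin d → ℝ := fun j =>
    (if x + unitVec j ∈ A then (0:ℝ) else 1) + (if x - unitVec j ∈ A then (0:ℝ) else 1) with hf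
  have h1 : (1:ℝ) ≤ f i := by
    rw [hf]; rcases hi with h | h <;> simp [h] <;> split_ifs <;> norm_num
  have h2 : f i ≤ ∑ j, f j :=
    Finset.single_le_sum (fun j _ => by rw [hf]; dsimp only; split_ifs <;> norm_num)
      (Finset.mem_univ i)
  unfold eA
  exact le_trans h1 h2

lemma qform_eq {d : ℕ} (A : Finset (Zd d)) : qform A = ∑ x ∈ A, eA A x :=
  Finset.sum_congr rfl fun x hx => negLap_chi A hx

lemma qform_nonneg {d : ℕ} (A : Finset (Zd d)) : 0 ≤ qform A := by
  rw [qform_eq]; exact Finset.sum_nonneg fun x _ => eA_nonneg A x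

lemma qform_singleton {d : ℕ} (x₀ : Zd d) : qform {x₀} = 2 * d := by
  have h1 : ∀ i : Fin d, x₀ + unitVec i ∉ ({x₀} : Finset (Zd d)) := by
    intro i h
    have := congrFun (Finset.mem_singleton.mp h) i
    simp [unitVec] at this
  have h2 : ∀ i : Fin d, x₀ - unitVec i ∉ ({x₀} : Finset (Zd d)) := by
    intro i h
    have := congrFun (Finset.mem_singleton.mp h) i
    simp [unitVec] at this
  rw [qform_eq, Finset.sum_singleton]
  unfold eA
  rw [Finset.sum_congr rfl fun i _ => by rw [if_neg (h1 i), if_neg (h2 i)]]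
  simp [Finset.sum_const]
  ring

/-- the path / exit-edge lemma. -/
lemma exists_exit {d : ℕ} (A : Finset (Zd d)) (lo hi : Fin d → ℤ) (n : ℕ) :
    ∀ x γ : Zd d, x ∈ A → γ ∉ A →
    (∀ i, lo i ≤ 2 * x i ∧ 2 * x i ≤ hi i) → (∀ i, lo i ≤ 2 * γ i ∧ 2 * γ i ≤ hi i) →
    dist1 x γ = n →
    ∃ u, u ∈ A ∧ (∀ i, lo i ≤ 2 * u i ∧ 2 * u i ≤ hi i) ∧
      ∃ i, (u + unitVec i ∉ A ∨ u - unitVec i ∉ A) := by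
  induction n with
  | zero =>
    intro x γ hx hγ _ _ hdist
    exfalso
    have : x = γ := by
      funext j
      have hz := (Finset.sum_eq_zero_iff).mp hdist j (Finset.mem_univ j)
      omega
    exact hγ (this ▸ hx)
  | succ n ih =>
    intro x γ hx hγ hxb hγb hdist
    have hne : ∃ i, x i ≠ γ i := by
      by_contra hc
      push_neg at hc
      have : dist1 x γ = 0 := by
        unfold dist1
        refine Finset.sum_eq_zero fun i _ => ?_
        have := hc i; omega
      omega
    obtain ⟨i, hi⟩ := hne
    rcases lt_or_gt_of_ne hi with hlt | hgt
    · -- step up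
      set x' := x + unitVec i with hx'def
      have hx'j : ∀ j, x' j = x j + if j = i then 1 else 0 := fun j => rfl
      by_cases hmem : x' ∈ A
      · refine ih x' γ hmem hγ ?_ hγb ?_
        · intro j
          have := hxb j; have := hγb j; have := hx'j j
          by_cases hj : j = i
          · subst hj; have := hγb j; simp [hx'j j] at *; omega
          · simp [hx'j j, hj]; omega
        · -- dist decreases
          have key : dist1 x' γ + 1 = dist1 x γ := by
            unfold dist1
            rw [← Finset.sum_erase_add _ _ (Finset.mem_univ i),
                ← Finset.sum_erase_add _ _ (Finset.mem_univ i)]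
            have heq : ∑ j ∈ Finset.univ.erase i, (x' j - γ j).natAbs
                = ∑ j ∈ Finset.univ.erase i, (x j - γ j).natAbs := by
              refine Finset.sum_congr rfl fun j hj => ?_
              have : j ≠ i := Finset.ne_of_mem_erase hj
              rw [hx'j j, if_neg this]; ring_nf
            rw [heq]
            have : x' i = x i + 1 := by rw [hx'j i, if_pos rfl]
            rw [this]
            omega
          omega
      · exact ⟨x, hx, hxb, i, Or.inl hmem⟩
    · -- step down
      set x' := x - unitVec i with hx'def
      have hx'j : ∀ j, x' j = x j - if j = i then 1 else 0 := fun j => rfl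
      by_cases hmem : x' ∈ A
      · refine ih x' γ hmem hγ ?_ hγb ?_
        · intro j
          have := hxb j; have := hγb j
          by_cases hj : j = i
          · subst hj; simp [hx'j j] at *; omega
          · simp [hx'j j, hj]; omega
        · have key : dist1 x' γ + 1 = dist1 x γ := by
            unfold dist1
            rw [← Finset.sum_erase_add _ _ (Finset.mem_univ i),
                ← Finset.sum_erase_add _ _ (Finset.mem_univ i)]
            have heq : ∑ j ∈ Finset.univ.erase i, (x' j - γ j).natAbs
                = ∑ j ∈ Finset.univ.erase i, (x j - γ j).natAbs := by
              refine Finset.sum_congr rfl fun j hj => ?_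
              have : j ≠ i := Finset.ne_of_mem_erase hj
              rw [hx'j j, if_neg this]; ring_nf
            rw [heq]
            have : x' i = x i - 1 := by rw [hx'j i, if_pos rfl]
            rw [this]
            omega
          omega
      · exact ⟨x, hx, hxb, i, Or.inr hmem⟩

/-- the cell map. -/
def cellOf {d : ℕ} (K : ℕ) (y : Zd d) : Zd d := fun i => (2 * y i + K) / (2 * K)

lemma cell_spec {d : ℕ} {K : ℕ} (hK : 0 < K) (y : Zd d) (i : Fin d) :
    -(K:ℤ) ≤ 2 * (y i - K * cellOf K y i) ∧ 2 * (y i - K * cellOf K y i) ≤ K - 1 := by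
  have hbpos : (0:ℤ) < 2 * K := by positivity
  have hdm := Int.mul_ediv_add_emod (2 * y i + K) (2 * K)
  have hr0 : 0 ≤ (2 * y i + K) % (2 * K) := Int.emod_nonneg _ (ne_of_gt hbpos)
  have hr1 : (2 * y i + K) % (2 * K) < 2 * K := Int.emod_lt_of_pos _ hbpos
  have hco : cellOf K y i = (2 * y i + K) / (2 * K) := rfl
  rw [hco]
  constructor
  · nlinarith [hdm, hr0]
  · nlinarith [hdm, hr1]

lemma cell_unique {K : ℕ} (hK : 0 < K) (t : ℤ) {z z' : ℤ}
    (h1 : -(K:ℤ) ≤ 2 * (t - K * z)) (h2 : 2 * (t - K * z) ≤ K - 1)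
    (h1' : -(K:ℤ) ≤ 2 * (t - K * z')) (h2' : 2 * (t - K * z') ≤ K - 1) : z = z' := by
  rcases lt_trichotomy z z' with h | h | h
  · exfalso
    have hz : z + 1 ≤ z' := h
    have : (2 * K : ℤ) * (z + 1) ≤ 2 * K * z' :=
      mul_le_mul_of_nonneg_left (by exact_mod_cast hz) (by positivity)
    nlinarith
  · exact h
  · exfalso
    have hz : z' + 1 ≤ z := h
    have : (2 * K : ℤ) * (z' + 1) ≤ 2 * K * z :=
      mul_le_mul_of_nonneg_left (by exact_mod_cast hz) (by positivity)
    nlinarith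

/-- cells have at most `K^d` points. -/
lemma cell_card {d : ℕ} {K : ℕ} (hK : 0 < K) (A : Finset (Zd d)) (z : Zd d) :
    (A.filter fun y => cellOf K y = z).card ≤ K ^ d := by
  classical
  have : (A.filter fun y => cellOf K y = z).card
      ≤ (Fintype.piFinset fun _ : Fin d => Finset.range K).card := by
    refine Finset.card_le_card_of_injOn
      (fun y => fun i => (y i - K * z i + (K / 2 : ℕ)).toNat) ?_ ?_
    · intro y hy
      rw [Finset.mem_coe, Finset.mem_filter] at hy
      rw [Finset.mem_coe, Fintype.mem_piFinset]
      intro i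
      rw [Finset.mem_range]
      have hs := cell_spec hK y i
      have he : cellOf K y i = z i := congrFun hy.2 i
      have hs2 : -(K:ℤ) ≤ 2 * (y i - K * z i) ∧ 2 * (y i - K * z i) ≤ K - 1 := by
        rw [← he]; exact hs
      show (y i - K * z i + (K / 2 : ℕ)).toNat < K
      omega
    · intro y hy y' hy' hxy
      simp only [Finset.coe_filter, Set.mem_setOf_eq] at hy hy'
      funext i
      have h1 := congrFun hxy i
      have hs := cell_spec hK y i
      have hs' := cell_spec hK y' i
      have he : cellOf K y i = z i := congrFun hy.2 i
      have he' : cellOf K y' i = z i := congrFun hy'.2 i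
      have hs2 : -(K:ℤ) ≤ 2 * (y i - K * z i) ∧ 2 * (y i - K * z i) ≤ K - 1 := by
        rw [← he]; exact hs
      have hs2' : -(K:ℤ) ≤ 2 * (y' i - K * z i) ∧ 2 * (y' i - K * z i) ≤ K - 1 := by
        rw [← he']; exact hs'
      have h2 : (y i - K * z i + (K / 2 : ℕ)).toNat = (y' i - K * z i + (K / 2 : ℕ)).toNat := h1
      clear h1 hxy hs hs' he he'
      omega
  have hcard : (Fintype.piFinset fun _ : Fin d => Finset.range K).card = K ^ d := by
    simp [Fintype.card_piFinset]
  exact this.trans (le_of_eq hcard)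

lemma K_le_Kstar (K : ℕ) : K ≤ Kstar K := by
  unfold Kstar; split <;> omega

lemma Kstar_pos (K : ℕ) : 0 < Kstar K := by
  unfold Kstar; split <;> omega

lemma main_lower {d K Q : ℕ} (hK : 0 < K) (hQ : 0 < Q)
    (Γ : Set (Zd d)) (hΓ : RelDense Γ K Q)
    (A : Finset (Zd d)) (hAne : A.Nonempty) (hAsub : (↑A : Set (Zd d)) ⊆ Γᶜ) :
    (A.card : ℝ) ≤ (K:ℝ) ^ d * qform A := by
  classical
  set f : Zd d → Zd d := cellOf K with hf
  set Bad : Finset (Zd d) :=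
    A.filter (fun u => ∃ i, u + unitVec i ∉ A ∨ u - unitVec i ∉ A) with hBad
  -- step 1 : volume bound
  have h1 : A.card ≤ (A.image f).card * K ^ d := by
    rw [Finset.card_eq_sum_card_fiberwise (f := f) (t := A.image f)
      (fun x hx => Finset.mem_image_of_mem f hx)]
    calc ∑ z ∈ A.image f, (A.filter fun y => f y = z).card
        ≤ ∑ _z ∈ A.image f, K ^ d :=
          Finset.sum_le_sum fun z _ => cell_card hK A z
      _ = (A.image f).card * K ^ d := by rw [Finset.sum_const, smul_eq_mul]
  -- step 2 : each nonempty cell yields a boundary point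
  have hsurj : ∀ z ∈ A.image f, ∃ u ∈ Bad, f u = z := by
    intro z hz
    obtain ⟨x, hxA, hfx⟩ := Finset.mem_image.mp hz
    have hQ2 := hΓ z
    have hnon : (Γ ∩ Lam0 K fun i => (K : ℤ) * z i).Nonempty :=
      Set.nonempty_of_ncard_ne_zero (by omega)
    obtain ⟨γ, hγΓ, hγL⟩ := hnon
    have hγA : γ ∉ A := fun h => (hAsub (Finset.mem_coe.mpr h)) hγΓ
    have hγLam : ∀ i, 2 * (γ i - (K : ℤ) * z i).natAbs < K := hγL
    have hxb : ∀ i, (2 * ((K:ℤ) * z i) - K) ≤ 2 * x i ∧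
        2 * x i ≤ 2 * ((K:ℤ) * z i) + (K - 1) := by
      intro i
      have hs := cell_spec hK x i
      have he : cellOf K x i = z i := congrFun hfx i
      have hs2 : -(K:ℤ) ≤ 2 * (x i - K * z i) ∧ 2 * (x i - K * z i) ≤ K - 1 := by
        rw [← he]; exact hs
      omega
    have hγb : ∀ i, (2 * ((K:ℤ) * z i) - K) ≤ 2 * γ i ∧
        2 * γ i ≤ 2 * ((K:ℤ) * z i) + (K - 1) := by
      intro i
      have := hγLam i
      omega
    obtain ⟨u, huA, hub, hedge⟩ := exists_exit A
      (fun i => 2 * ((K:ℤ) * z i) - K) (fun i => 2 * ((K:ℤ) * z i) + (K - 1))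
      (dist1 x γ) x γ hxA hγA hxb hγb rfl
    refine ⟨u, Finset.mem_filter.mpr ⟨huA, hedge⟩, ?_⟩
    funext i
    have hs := cell_spec hK u i
    have hu2 : -(K:ℤ) ≤ 2 * (u i - K * z i) ∧ 2 * (u i - K * z i) ≤ K - 1 := by
      have := hub i; omega
    exact cell_unique hK (u i) hs.1 hs.2 hu2.1 hu2.2
  have h2 : (A.image f).card ≤ Bad.card := by
    refine Finset.card_le_card_of_surjOn f ?_
    intro z hz
    obtain ⟨u, hu, hfu⟩ := hsurj z (by exact_mod_cast hz)
    exact ⟨u, by exact_mod_cast hu, hfu⟩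
  -- step 3 : Bad.card ≤ qform A
  have h3 : (Bad.card : ℝ) ≤ qform A := by
    rw [qform_eq]
    have ha : ∑ x ∈ Bad, (1:ℝ) ≤ ∑ x ∈ Bad, eA A x :=
      Finset.sum_le_sum fun x hx => eA_ge_one A x (Finset.mem_filter.mp hx).2
    have hb : ∑ x ∈ Bad, eA A x ≤ ∑ x ∈ A, eA A x :=
      Finset.sum_le_sum_of_subset_of_nonneg (Finset.filter_subset _ _)
        (fun x _ _ => eA_nonneg A x)
    have hc : ∑ x ∈ Bad, (1:ℝ) = (Bad.card : ℝ) := by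
      rw [Finset.sum_const, nsmul_eq_mul, mul_one]
    linarith
  -- combine
  have h4 : A.card ≤ Bad.card * K ^ d := h1.trans (Nat.mul_le_mul_right _ h2)
  have h5 : (A.card : ℝ) ≤ (Bad.card : ℝ) * (K:ℝ) ^ d := by exact_mod_cast h4
  have h6 : (Bad.card : ℝ) * (K:ℝ) ^ d ≤ qform A * (K:ℝ) ^ d :=
    mul_le_mul_of_nonneg_right h3 (by positivity)
  calc (A.card : ℝ) ≤ (Bad.card : ℝ) * (K:ℝ) ^ d := h5
    _ ≤ qform A * (K:ℝ) ^ d := h6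
    _ = (K:ℝ) ^ d * qform A := by ring


/-- for `Γ ⊊ ℤ^d` `(K,Q)`-relatively dense, `K_*^{-d} ≤ β(Γ) ≤ 2d`. -/
theorem stmt2 (d K Q : ℕ) (hd : 0 < d) (hK : 0 < K) (hQ : 0 < Q)
    (Γ : Set (Zd d)) (hne : Γ ≠ Set.univ) (hΓ : RelDense Γ K Q) :
    ((Kstar K : ℝ) ^ d)⁻¹ ≤ betaG Γ ∧ betaG Γ ≤ 2 * d := by
  classical
  obtain ⟨x₀, hx₀⟩ := (Set.ne_univ_iff_exists_notMem Γ).mp hne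
  have hmem : (2 * (d:ℝ)) ∈ {r | ∃ A : Finset (Zd d), A.Nonempty ∧
      (↑A : Set (Zd d)) ⊆ Γᶜ ∧ r = qform A / A.card} := by
    refine ⟨{x₀}, Finset.singleton_nonempty _, ?_, ?_⟩
    · intro y hy
      simp only [Finset.coe_singleton, Set.mem_singleton_iff] at hy
      subst hy; exact hx₀
    · rw [qform_singleton]; simp
  have hbdd : BddBelow {r | ∃ A : Finset (Zd d), A.Nonempty ∧
      (↑A : Set (Zd d)) ⊆ Γᶜ ∧ r = qform A / A.card} := by
    refine ⟨0, fun r hr => ?_⟩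
    obtain ⟨A, _, _, hrA⟩ := hr
    rw [hrA]
    exact div_nonneg (qform_nonneg A) (by positivity)
  constructor
  · refine le_csInf ⟨_, hmem⟩ ?_
    rintro r ⟨A, hAne, hAsub, rfl⟩
    have hcard : (0:ℝ) < A.card := by
      exact_mod_cast Finset.card_pos.mpr hAne
    have hKs : (K:ℝ) ^ d ≤ (Kstar K : ℝ) ^ d := by
      refine pow_le_pow_left₀ (by positivity) ?_ d
      exact_mod_cast K_le_Kstar K
    have hP : (0:ℝ) < (Kstar K : ℝ) ^ d := by
      have := Kstar_pos K
      positivity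
    have hmain : (A.card : ℝ) ≤ (Kstar K : ℝ) ^ d * qform A := by
      calc (A.card : ℝ) ≤ (K:ℝ) ^ d * qform A := main_lower hK hQ Γ hΓ A hAne hAsub
        _ ≤ (Kstar K : ℝ) ^ d * qform A :=
          mul_le_mul_of_nonneg_right hKs (qform_nonneg A)
    rw [le_div_iff₀ hcard]
    calc ((Kstar K : ℝ) ^ d)⁻¹ * (A.card : ℝ)
        ≤ ((Kstar K : ℝ) ^ d)⁻¹ * ((Kstar K : ℝ) ^ d * qform A) :=
          mul_le_mul_of_nonneg_left hmain (by positivity)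
      _ = qform A := by field_simp
  · exact csInf_le hbdd hmem
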